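/- Under conditions (i)-(iii) of the ultimate boundedness theorem, along any solution y(t) of y' = f(y) + μ g(x(t)) with |μ| M₀ M_g ≤ 1 - β/b(B), on any interval [s₂, s₁] where ‖y(t)‖ ≥ B holds for all t, one has dV(y(t))/dt ≤ -b(‖y(t)‖) + |μ| M_g c(‖y(t)‖) ≤ (|μ|M₀M_g - 1) b(B) ≤ -β. -/

import Mathlib

open scoped RealInnerProductSpace

/-- Along a solution of `y' = f(y) + μ g(x(t))` staying outside the ball of radius `B`,
the Lyapunov function decreases at rate at least `β`:
`dV(y(t))/dt ≤ -b(‖y(t)‖) + |μ| Mg c(‖y(t)‖) ≤ (|μ|M₀Mg - 1) b(B) ≤ -β`. -/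
theorem lyapunov_decrease_along_solution
    {m n : ℕ}
    (f : EuclideanSpace ℝ (Fin n) → EuclideanSpace ℝ (Fin n))
    (g : EuclideanSpace ℝ (Fin m) → EuclideanSpace ℝ (Fin n))
    (μ : ℝ) (Mg : ℝ) (hMg : 0 < Mg) (hgbd : ∀ x, ‖g x‖ ≤ Mg)
    (V : EuclideanSpace ℝ (Fin n) → ℝ) (hV : ContDiff ℝ 1 V)
    (B M₀ : ℝ) (hB : 0 ≤ B) (hM₀ : 0 < M₀)
    (b c : ℝ → ℝ)
    (hb_incr : StrictMonoOn b (Set.Ici B)) (hbB : 0 < b B)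
    (hVb : ∀ y, B ≤ ‖y‖ → ⟪gradient V y, f y⟫ ≤ -b ‖y‖)
    (hc_pos : ∀ r, B ≤ r → 0 < c r) (hcb : ∀ r, B ≤ r → c r ≤ M₀ * b r)
    (hVc : ∀ y, B ≤ ‖y‖ → ‖gradient V y‖ ≤ c ‖y‖)
    (β : ℝ) (hβ : 0 < β) (hβb : β < b B)
    (hμsmall : |μ| * M₀ * Mg ≤ 1 - β/(b B))
    (x : ℝ → EuclideanSpace ℝ (Fin m))
    (y : ℝ → EuclideanSpace ℝ (Fin n))
    (s₂ s₁ : ℝ) (hs : s₂ ≤ s₁)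
    (hy : ∀ t ∈ Set.Icc s₂ s₁, HasDerivAt y (f (y t) + μ • g (x t)) t)
    (hout : ∀ t ∈ Set.Icc s₂ s₁, B ≤ ‖y t‖) :
    ∀ t ∈ Set.Icc s₂ s₁,
      deriv (fun s => V (y s)) t ≤ -b ‖y t‖ + |μ| * Mg * c ‖y t‖ ∧
      -b ‖y t‖ + |μ| * Mg * c ‖y t‖ ≤ (|μ| * M₀ * Mg - 1) * b B ∧
      (|μ| * M₀ * Mg - 1) * b B ≤ -β := by
  intro t ht
  have hBy := hout t ht
  have hbmono : b B ≤ b ‖y t‖ :=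
    hb_incr.monotoneOn Set.self_mem_Ici hBy hBy
  have hdiv : 0 < β / b B := div_pos hβ hbB
  have hnd : -β / b B = -(β / b B) := neg_div _ _
  have hk : |μ| * M₀ * Mg - 1 ≤ -β / b B := by linarith
  have hk0 : |μ| * M₀ * Mg - 1 ≤ 0 := by linarith
  refine ⟨?_, ?_, ?_⟩
  · -- derivative bound
    have hd : HasDerivAt (fun s => V (y s))
        (⟪gradient V (y t), f (y t) + μ • g (x t)⟫) t := by
      have hG : HasGradientAt V (gradient V (y t)) (y t) :=
        ((hV.differentiable one_ne_zero) (y t)).hasGradientAt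
      have := hG.hasFDerivAt.comp_hasDerivAt t (hy t ht)
      simp at this ⊢
      exact this
    rw [hd.deriv]
    rw [inner_add_right, inner_smul_right]
    have h1 : ⟪gradient V (y t), f (y t)⟫ ≤ -b ‖y t‖ := hVb (y t) hBy
    have h2 : μ * ⟪gradient V (y t), g (x t)⟫ ≤ |μ| * Mg * c ‖y t‖ := by
      calc μ * ⟪gradient V (y t), g (x t)⟫ ≤ |μ * ⟪gradient V (y t), g (x t)⟫| := le_abs_self _
        _ = |μ| * |⟪gradient V (y t), g (x t)⟫| := abs_mul _ _
        _ ≤ |μ| * (‖gradient V (y t)‖ * ‖g (x t)‖) := by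
            gcongr
            exact abs_real_inner_le_norm _ _
        _ ≤ |μ| * (c ‖y t‖ * Mg) := by
            have := hVc (y t) hBy
            have := hgbd (x t)
            have hc := (hc_pos ‖y t‖ hBy).le
            have hcn := (hc_pos ‖y t‖ hBy).le
            gcongr
        _ = |μ| * Mg * c ‖y t‖ := by ring
    linarith
  · have hcbb := hcb ‖y t‖ hBy
    have h1 : -b ‖y t‖ + |μ| * Mg * c ‖y t‖ ≤ (|μ| * M₀ * Mg - 1) * b ‖y t‖ := by
      have hμMg : 0 ≤ |μ| * Mg := by positivity
      nlinarith
    have h2 : (|μ| * M₀ * Mg - 1) * b ‖y t‖ ≤ (|μ| * M₀ * Mg - 1) * b B :=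
      mul_le_mul_of_nonpos_left hbmono hk0
    linarith
  · calc (|μ| * M₀ * Mg - 1) * b B ≤ (-β / b B) * b B :=
        mul_le_mul_of_nonneg_right hk hbB.le
      _ = -β := by field_simp
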